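/- There exists a constant C > 0 such that for every t ∈ ℝ and every φ : ℤ_{≥1} → ℂ with Σ_{k≥1} |φ(k)| < ∞, the solution of the discrete Schrödinger equation on the positive integers with Neumann boundary condition u(t,0) = u(t,1), given by u(t,j) := Σ_{k≥1} (K_t(j-k) + K_t(j+k-1)) φ(k) for j ≥ 1, satisfies sup_{j≥1} |u(t,j)| ≤ C (1+|t|)^{-1/3} Σ_{k≥1} |φ(k)|. -/

import Mathlib

open Real MeasureTheory
open Set

set_option linter.unusedVariables false
set_option linter.unreachableTactic false
set_option linter.unusedTactic false


noncomputable def osc (φ : ℝ → ℝ) (ξ : ℝ) : ℂ := Complex.exp (Complex.I * (φ ξ : ℂ))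

lemma norm_osc (φ : ℝ → ℝ) (ξ : ℝ) : ‖osc φ ξ‖ = 1 := by
  simp [osc, Complex.norm_exp]

lemma hasDerivAt_osc {φ φ' : ℝ → ℝ} {x : ℝ} (h : HasDerivAt φ (φ' x) x) :
    HasDerivAt (osc φ) (Complex.I * (φ' x : ℂ) * osc φ x) x := by
  have h1 : HasDerivAt (fun y => (Complex.I * (φ y : ℂ))) (Complex.I * (φ' x : ℂ)) x :=
    (h.ofReal_comp).const_mul Complex.I
  have h2 := h1.cexp
  exact h2.congr_deriv (by unfold osc; ring)

lemma continuousOn_osc {φ : ℝ → ℝ} {s : Set ℝ} (h : ContinuousOn φ s) :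
    ContinuousOn (osc φ) s := by
  apply Complex.continuous_exp.comp_continuousOn
  exact (Complex.continuous_ofReal.comp_continuousOn h).const_smul Complex.I |>.congr
    (fun x _ => by simp [smul_eq_mul])

lemma osc_intervalIntegrable {φ : ℝ → ℝ} {a b c d : ℝ} (h : ContinuousOn φ (Icc a b))
    (hsub : uIcc c d ⊆ Icc a b) : IntervalIntegrable (osc φ) volume c d :=
  ((continuousOn_osc h).mono hsub).intervalIntegrable

lemma norm_integral_osc_le_length {φ : ℝ → ℝ} {a b : ℝ} (hab : a ≤ b) :
    ‖∫ ξ in a..b, osc φ ξ‖ ≤ b - a := by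
  have := intervalIntegral.norm_integral_le_of_norm_le_const
    (C := 1) (f := osc φ) (a := a) (b := b) (fun x _ => le_of_eq (norm_osc φ x))
  simpa [abs_of_nonneg (sub_nonneg.2 hab)] using this
lemma vdc1 {φ φ' φ'' : ℝ → ℝ} {a b μ : ℝ} (hab : a ≤ b) (hμ : 0 < μ)
    (hd1 : ∀ x ∈ Icc a b, HasDerivAt φ (φ' x) x)
    (hd2 : ∀ x ∈ Icc a b, HasDerivAt φ' (φ'' x) x)
    (hc2 : ContinuousOn φ'' (Icc a b))
    (hpos : ∀ x ∈ Icc a b, 0 ≤ φ'' x)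
    (hlow : ∀ x ∈ Icc a b, μ ≤ |φ' x|) :
    ‖∫ ξ in a..b, osc φ ξ‖ ≤ 4 / μ := by
  have huIcc : uIcc a b = Icc a b := uIcc_of_le hab
  have hne : ∀ x ∈ Icc a b, φ' x ≠ 0 := by
    intro x hx h0
    have := hlow x hx
    rw [h0, abs_zero] at this; linarith
  have hc1 : ContinuousOn φ' (Icc a b) :=
    fun x hx => (hd2 x hx).continuousAt.continuousWithinAt
  -- g = -I / φ'
  set g : ℝ → ℂ := fun x => -Complex.I * ((φ' x : ℂ))⁻¹ with hg
  set g' : ℝ → ℂ := fun x => Complex.I * ((φ'' x : ℂ) / (φ' x : ℂ) ^ 2) with hg'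
  have hgder : ∀ x ∈ Icc a b, HasDerivAt g (g' x) x := by
    intro x hx
    have h1 : HasDerivAt (fun y => ((φ' y : ℝ) : ℂ)) ((φ'' x : ℂ)) x := (hd2 x hx).ofReal_comp
    have h0 : ((φ' x : ℂ)) ≠ 0 := Complex.ofReal_ne_zero.2 (hne x hx)
    have h2 : HasDerivAt (fun y => ((φ' y : ℂ))⁻¹) (-(((φ' x : ℂ)) ^ 2)⁻¹ * (φ'' x : ℂ)) x :=
      (hasDerivAt_inv h0).comp x h1
    have h3 := h2.const_mul (-Complex.I)
    refine h3.congr_deriv ?_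
    have h4 : ((φ' x : ℂ)) ^ 2 ≠ 0 := pow_ne_zero 2 h0
    simp only [hg']
    field_simp
  have hvder : ∀ x ∈ Icc a b, HasDerivAt (osc φ) (Complex.I * (φ' x : ℂ) * osc φ x) x :=
    fun x hx => hasDerivAt_osc (hd1 x hx)
  have hg'int : IntervalIntegrable g' volume a b := by
    apply ContinuousOn.intervalIntegrable
    rw [huIcc]
    exact continuousOn_const.mul ((Complex.continuous_ofReal.comp_continuousOn hc2).div
      ((Complex.continuous_ofReal.comp_continuousOn hc1).pow 2)
      (fun x hx => pow_ne_zero 2 (Complex.ofReal_ne_zero.2 (hne x hx))))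
  have hv'int : IntervalIntegrable (fun x => Complex.I * (φ' x : ℂ) * osc φ x) volume a b := by
    apply ContinuousOn.intervalIntegrable
    rw [huIcc]
    have hoc : ContinuousOn (osc φ) (Icc a b) := by
      apply Complex.continuous_exp.comp_continuousOn
      have hφc : ContinuousOn φ (Icc a b) := fun x hx => (hd1 x hx).continuousAt.continuousWithinAt
      exact continuousOn_const.mul (Complex.continuous_ofReal.comp_continuousOn hφc)
    exact (continuousOn_const.mul (Complex.continuous_ofReal.comp_continuousOn hc1)).mul hoc
  -- integrand equality
  have heq : EqOn (osc φ) (fun x => g x * (Complex.I * (φ' x : ℂ) * osc φ x)) (uIcc a b) := by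
    intro x hx
    rw [huIcc] at hx
    have h0 : ((φ' x : ℂ)) ≠ 0 := by exact_mod_cast hne x hx
    simp only [hg]
    field_simp
    linear_combination (osc φ x) * Complex.I_sq
  have hibp : ∫ x in a..b, g x * (Complex.I * (φ' x : ℂ) * osc φ x)
      = g b * osc φ b - g a * osc φ a - ∫ x in a..b, g' x * osc φ x := by
    apply intervalIntegral.integral_mul_deriv_eq_deriv_mul
      (fun x hx => hgder x (huIcc ▸ hx)) (fun x hx => hvder x (huIcc ▸ hx)) hg'int hv'int
  have hnormg : ∀ x ∈ Icc a b, ‖g x‖ ≤ 1 / μ := by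
    intro x hx
    have : ‖g x‖ = |φ' x|⁻¹ := by
      simp [hg, norm_mul, norm_inv]
    rw [this, ← one_div]
    apply one_div_le_one_div_of_le hμ (hlow x hx)
  -- bound ∫ ‖g' x * osc‖
  have habmem : a ∈ Icc a b := ⟨le_refl a, hab⟩
  have hbmem : b ∈ Icc a b := ⟨hab, le_refl b⟩
  have hF : ∀ x ∈ uIcc a b, HasDerivAt (fun y => -(φ' y)⁻¹) (φ'' x / (φ' x) ^ 2) x := by
    intro x hx
    rw [huIcc] at hx
    have := ((hd2 x hx).inv (hne x hx)).neg
    refine this.congr_deriv ?_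
    ring
  have hfint : IntervalIntegrable (fun x => φ'' x / (φ' x) ^ 2) volume a b := by
    apply ContinuousOn.intervalIntegrable
    rw [huIcc]
    exact hc2.div (hc1.pow 2) (fun x hx => pow_ne_zero 2 (hne x hx))
  have hcalc : ∫ x in a..b, φ'' x / (φ' x) ^ 2 = -(φ' b)⁻¹ - -(φ' a)⁻¹ :=
    intervalIntegral.integral_eq_sub_of_hasDerivAt hF hfint
  have hrest : ‖∫ x in a..b, g' x * osc φ x‖ ≤ 2 / μ := by
    calc ‖∫ x in a..b, g' x * osc φ x‖ ≤ ∫ x in a..b, ‖g' x * osc φ x‖ :=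
          intervalIntegral.norm_integral_le_integral_norm hab
      _ = ∫ x in a..b, φ'' x / (φ' x) ^ 2 := by
          apply intervalIntegral.integral_congr
          intro x hx
          rw [huIcc] at hx
          show ‖g' x * osc φ x‖ = φ'' x / (φ' x) ^ 2
          have h1 : ‖g' x * osc φ x‖ = |φ'' x| / |φ' x| ^ 2 := by
            rw [norm_mul, norm_osc, mul_one]
            simp [hg', norm_mul, map_div₀, map_pow]
          rw [h1, abs_of_nonneg (hpos x hx), sq_abs]
      _ = -(φ' b)⁻¹ - -(φ' a)⁻¹ := hcalc
      _ ≤ |(φ' b)⁻¹| + |(φ' a)⁻¹| := by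
          have := abs_sub (-(φ' b)⁻¹) (-(φ' a)⁻¹)
          calc -(φ' b)⁻¹ - -(φ' a)⁻¹ ≤ |(-(φ' b)⁻¹) - (-(φ' a)⁻¹)| := le_abs_self _
            _ ≤ |(-(φ' b)⁻¹)| + |(-(φ' a)⁻¹)| := abs_sub _ _
            _ = |(φ' b)⁻¹| + |(φ' a)⁻¹| := by rw [abs_neg, abs_neg]
      _ ≤ 1 / μ + 1 / μ := by
          have h1 : |(φ' b)⁻¹| ≤ 1 / μ := by
            rw [abs_inv, ← one_div]
            exact one_div_le_one_div_of_le hμ (hlow b hbmem)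
          have h2 : |(φ' a)⁻¹| ≤ 1 / μ := by
            rw [abs_inv, ← one_div]
            exact one_div_le_one_div_of_le hμ (hlow a habmem)
          linarith
      _ = 2 / μ := by ring
  calc ‖∫ ξ in a..b, osc φ ξ‖
      = ‖g b * osc φ b - g a * osc φ a - ∫ x in a..b, g' x * osc φ x‖ := by
        rw [intervalIntegral.integral_congr heq, hibp]
    _ ≤ ‖g b * osc φ b - g a * osc φ a‖ + ‖∫ x in a..b, g' x * osc φ x‖ := norm_sub_le _ _
    _ ≤ (‖g b * osc φ b‖ + ‖g a * osc φ a‖) + 2 / μ :=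
        add_le_add (norm_sub_le _ _) hrest
    _ ≤ (1 / μ + 1 / μ) + 2 / μ := by
        have hb' : ‖g b * osc φ b‖ ≤ 1 / μ := by
          rw [norm_mul, norm_osc, mul_one]; exact hnormg b hbmem
        have ha' : ‖g a * osc φ a‖ ≤ 1 / μ := by
          rw [norm_mul, norm_osc, mul_one]; exact hnormg a habmem
        linarith
    _ = 4 / μ := by ring
lemma slope_lb {g g' : ℝ → ℝ} {a b lam : ℝ}
    (hd : ∀ x ∈ Icc a b, HasDerivAt g (g' x) x)
    (hl : ∀ x ∈ Icc a b, lam ≤ g' x) :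
    ∀ x ∈ Icc a b, ∀ y ∈ Icc a b, x ≤ y → lam * (y - x) ≤ g y - g x := by
  intro x hx y hy hxy
  have hmono : MonotoneOn (fun z => g z - lam * z) (Icc a b) := by
    apply monotoneOn_of_deriv_nonneg (convex_Icc a b)
    · exact ContinuousOn.sub (fun z hz => (hd z hz).continuousAt.continuousWithinAt)
        (continuous_const.mul continuous_id).continuousOn
    · intro z hz
      rw [interior_Icc] at hz
      exact ((hd z (Ioo_subset_Icc_self hz)).sub
        ((hasDerivAt_id z).const_mul lam)).differentiableAt.differentiableWithinAt
    · intro z hz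
      rw [interior_Icc] at hz
      have hz' := Ioo_subset_Icc_self hz
      have hder : HasDerivAt (fun z => g z - lam * z) (g' z - lam) z := by
        have h := (hd z hz').sub ((hasDerivAt_id' z).const_mul lam)
        rw [mul_one] at h
        exact h
      rw [hder.deriv]
      have := hl z hz'
      linarith
  have := hmono hx hy hxy
  simp only at this
  linarith

lemma mono_of_slope {g g' : ℝ → ℝ} {a b lam : ℝ} (hlam : 0 < lam)
    (hd : ∀ x ∈ Icc a b, HasDerivAt g (g' x) x)
    (hl : ∀ x ∈ Icc a b, lam ≤ g' x) :
    ∀ x ∈ Icc a b, ∀ y ∈ Icc a b, x ≤ y → g x ≤ g y := by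
  intro x hx y hy hxy
  have := slope_lb hd hl x hx y hy hxy
  nlinarith [sub_nonneg.2 hxy]

lemma split_lemma {g g' : ℝ → ℝ} {a b lam δ : ℝ} (hab : a ≤ b) (hlam : 0 < lam) (hδ : 0 < δ)
    (hd : ∀ x ∈ Icc a b, HasDerivAt g (g' x) x)
    (hl : ∀ x ∈ Icc a b, lam ≤ g' x) :
    ∃ c₁ c₂, a ≤ c₁ ∧ c₁ ≤ c₂ ∧ c₂ ≤ b ∧ c₂ - c₁ ≤ 2 * δ ∧
      (c₁ = a ∨ ∀ x ∈ Icc a c₁, g x ≤ -(δ * lam)) ∧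
      (c₂ = b ∨ ∀ x ∈ Icc c₂ b, δ * lam ≤ g x) := by
  have hgc : ContinuousOn g (Icc a b) := fun x hx => (hd x hx).continuousAt.continuousWithinAt
  have hmono := mono_of_slope hlam hd hl
  set S₁ : Set ℝ := {x ∈ Icc a b | g x ≤ -(δ * lam)} with hS₁
  set S₂ : Set ℝ := {x ∈ Icc a b | δ * lam ≤ g x} with hS₂
  have hS₁c : IsCompact S₁ := by
    have hSe : S₁ = Icc a b ∩ g ⁻¹' (Iic (-(δ * lam))) := rfl
    rw [hSe]
    exact isCompact_Icc.of_isClosed_subset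
      (hgc.preimage_isClosed_of_isClosed isClosed_Icc isClosed_Iic) inter_subset_left
  have hS₂c : IsCompact S₂ := by
    have hSe : S₂ = Icc a b ∩ g ⁻¹' (Ici (δ * lam)) := rfl
    rw [hSe]
    exact isCompact_Icc.of_isClosed_subset
      (hgc.preimage_isClosed_of_isClosed isClosed_Icc isClosed_Ici) inter_subset_left
  have hS₁sub : S₁ ⊆ Icc a b := fun x hx => hx.1
  have hS₂sub : S₂ ⊆ Icc a b := fun x hx => hx.1
  obtain ⟨c₁, hc₁a, hc₁b, hc₁ub, hc₁alt⟩ : ∃ c₁, a ≤ c₁ ∧ c₁ ≤ b ∧ (∀ x ∈ S₁, x ≤ c₁) ∧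
      (c₁ = a ∨ (c₁ ∈ S₁ ∧ ∀ x ∈ Icc a c₁, g x ≤ -(δ * lam))) := by
    by_cases h₁ : S₁.Nonempty
    · have hmem : sSup S₁ ∈ S₁ := hS₁c.sSup_mem h₁
      refine ⟨sSup S₁, hmem.1.1, hmem.1.2, fun x hx => le_csSup hS₁c.bddAbove hx,
        Or.inr ⟨hmem, ?_⟩⟩
      intro x hx
      have hxab : x ∈ Icc a b := ⟨hx.1, le_trans hx.2 hmem.1.2⟩
      exact le_trans (hmono x hxab (sSup S₁) hmem.1 hx.2) hmem.2
    · exact ⟨a, le_refl a, hab, fun x hx => absurd ⟨x, hx⟩ h₁, Or.inl rfl⟩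
  obtain ⟨c₂, hc₂a, hc₂b, hc₂lb, hc₂alt⟩ : ∃ c₂, a ≤ c₂ ∧ c₂ ≤ b ∧ (∀ x ∈ S₂, c₂ ≤ x) ∧
      (c₂ = b ∨ (c₂ ∈ S₂ ∧ ∀ x ∈ Icc c₂ b, δ * lam ≤ g x)) := by
    by_cases h₂ : S₂.Nonempty
    · have hmem : sInf S₂ ∈ S₂ := hS₂c.sInf_mem h₂
      refine ⟨sInf S₂, hmem.1.1, hmem.1.2, fun x hx => csInf_le hS₂c.bddBelow hx,
        Or.inr ⟨hmem, ?_⟩⟩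
      intro x hx
      have hxab : x ∈ Icc a b := ⟨le_trans hmem.1.1 hx.1, hx.2⟩
      exact le_trans hmem.2 (hmono (sInf S₂) hmem.1 x hxab hx.1)
    · exact ⟨b, hab, le_refl b, fun x hx => absurd ⟨x, hx⟩ h₂, Or.inl rfl⟩
  have hc₁c₂ : c₁ ≤ c₂ := by
    rcases hc₁alt with h | ⟨hm₁, _⟩
    · rw [h]; exact hc₂a
    rcases hc₂alt with h | ⟨hm₂, _⟩
    · rw [h]; exact hc₁b
    by_contra hcon
    push_neg at hcon
    have := hmono c₂ hm₂.1 c₁ hm₁.1 (le_of_lt hcon)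
    have h1 := hm₁.2
    have h2 := hm₂.2
    nlinarith [mul_pos hδ hlam]
  have hlen : c₂ - c₁ ≤ 2 * δ := by
    by_contra hgt
    push_neg at hgt
    obtain ⟨x, hx⟩ : ∃ x : ℝ, x = (c₁ + c₂) / 2 - δ := ⟨_, rfl⟩
    obtain ⟨y, hy⟩ : ∃ y : ℝ, y = (c₁ + c₂) / 2 + δ := ⟨_, rfl⟩
    have hc₁x : c₁ < x := by rw [hx]; linarith
    have hyc₂ : y < c₂ := by rw [hy]; linarith
    have hxab : x ∈ Icc a b := ⟨by linarith, by linarith⟩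
    have hyab : y ∈ Icc a b := ⟨by linarith, by linarith⟩
    have hgx : -(δ * lam) < g x := by
      by_contra hcon
      push_neg at hcon
      have : x ∈ S₁ := ⟨hxab, hcon⟩
      have := hc₁ub x this
      linarith
    have hgy : g y < δ * lam := by
      by_contra hcon
      push_neg at hcon
      have : y ∈ S₂ := ⟨hyab, hcon⟩
      have := hc₂lb y this
      linarith
    have hsl := slope_lb hd hl x hxab y hyab (by rw [hx, hy]; linarith)
    have : y - x = 2 * δ := by rw [hx, hy]; ring
    rw [this] at hsl
    nlinarith
  refine ⟨c₁, c₂, hc₁a, hc₁c₂, hc₂b, hlen, ?_, ?_⟩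
  · rcases hc₁alt with h | ⟨_, h⟩
    · exact Or.inl h
    · exact Or.inr h
  · rcases hc₂alt with h | ⟨_, h⟩
    · exact Or.inl h
    · exact Or.inr h
section
variable {φ φ' φ'' φ''' : ℝ → ℝ} {a b lam : ℝ}

lemma vdc2 (hab : a ≤ b) (hlam : 0 < lam)
    (hd1 : ∀ x ∈ Icc a b, HasDerivAt φ (φ' x) x)
    (hd2 : ∀ x ∈ Icc a b, HasDerivAt φ' (φ'' x) x)
    (hc2 : ContinuousOn φ'' (Icc a b))
    (hlow : ∀ x ∈ Icc a b, lam ≤ φ'' x) :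
    ‖∫ ξ in a..b, osc φ ξ‖ ≤ 10 * lam ^ (-(1/2 : ℝ)) := by
  obtain ⟨δ, hδdef⟩ : ∃ δ : ℝ, δ = lam ^ (-(1/2 : ℝ)) := ⟨_, rfl⟩
  have hδpos : 0 < δ := hδdef ▸ Real.rpow_pos_of_pos hlam _
  have hδlam : δ * lam = lam ^ ((1/2 : ℝ)) := by
    have h := Real.rpow_add hlam (-(1/2 : ℝ)) 1
    rw [Real.rpow_one] at h
    rw [hδdef, ← h]
    norm_num
  have hinv : 4 / (δ * lam) = 4 * δ := by
    rw [hδlam, hδdef, Real.rpow_neg hlam.le, div_eq_mul_inv]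
  obtain ⟨c₁, c₂, h1, h2, h3, hlen, hL, hR⟩ := split_lemma hab hlam hδpos hd2 hlow
  have hc₁b : c₁ ≤ b := le_trans h2 h3
  have hac₂ : a ≤ c₂ := le_trans h1 h2
  have hφc : ContinuousOn φ (Icc a b) := fun x hx => (hd1 x hx).continuousAt.continuousWithinAt
  have I₁ : IntervalIntegrable (osc φ) volume a c₁ :=
    osc_intervalIntegrable hφc (by rw [uIcc_of_le h1]; exact Icc_subset_Icc le_rfl hc₁b)
  have I₂ : IntervalIntegrable (osc φ) volume c₁ c₂ :=
    osc_intervalIntegrable hφc (by rw [uIcc_of_le h2]; exact Icc_subset_Icc h1 h3)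
  have I₃ : IntervalIntegrable (osc φ) volume c₂ b :=
    osc_intervalIntegrable hφc (by rw [uIcc_of_le h3]; exact Icc_subset_Icc hac₂ le_rfl)
  have hsum : (∫ ξ in a..c₁, osc φ ξ) + (∫ ξ in c₁..c₂, osc φ ξ) + (∫ ξ in c₂..b, osc φ ξ)
      = ∫ ξ in a..b, osc φ ξ := by
    rw [intervalIntegral.integral_add_adjacent_intervals I₁ I₂,
      intervalIntegral.integral_add_adjacent_intervals (I₁.trans I₂) I₃]
  have B₁ : ‖∫ ξ in a..c₁, osc φ ξ‖ ≤ 4 / (δ * lam) := by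
    rcases hL with h | h
    · rw [h]
      simp only [intervalIntegral.integral_same, norm_zero]
      positivity
    · have hsub : Icc a c₁ ⊆ Icc a b := Icc_subset_Icc le_rfl hc₁b
      exact vdc1 h1 (mul_pos hδpos hlam)
        (fun x hx => hd1 x (hsub hx)) (fun x hx => hd2 x (hsub hx)) (hc2.mono hsub)
        (fun x hx => le_trans hlam.le (hlow x (hsub hx)))
        (fun x hx => le_abs.2 (Or.inr (by linarith [h x hx])))
  have B₃ : ‖∫ ξ in c₂..b, osc φ ξ‖ ≤ 4 / (δ * lam) := by
    rcases hR with h | h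
    · rw [h]
      simp only [intervalIntegral.integral_same, norm_zero]
      positivity
    · have hsub : Icc c₂ b ⊆ Icc a b := Icc_subset_Icc hac₂ le_rfl
      exact vdc1 h3 (mul_pos hδpos hlam)
        (fun x hx => hd1 x (hsub hx)) (fun x hx => hd2 x (hsub hx)) (hc2.mono hsub)
        (fun x hx => le_trans hlam.le (hlow x (hsub hx)))
        (fun x hx => le_abs.2 (Or.inl (h x hx)))
  have B₂ : ‖∫ ξ in c₁..c₂, osc φ ξ‖ ≤ 2 * δ :=
    le_trans (norm_integral_osc_le_length h2) (by linarith)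
  calc ‖∫ ξ in a..b, osc φ ξ‖
      ≤ ‖∫ ξ in a..c₁, osc φ ξ‖ + ‖∫ ξ in c₁..c₂, osc φ ξ‖ + ‖∫ ξ in c₂..b, osc φ ξ‖ := by
        rw [← hsum]
        exact le_trans (norm_add_le _ _) (by gcongr; exact norm_add_le _ _)
    _ ≤ 4 / (δ * lam) + 2 * δ + 4 / (δ * lam) := by gcongr
    _ = 10 * δ := by rw [hinv]; ring
    _ = 10 * lam ^ (-(1/2 : ℝ)) := by rw [hδdef]

lemma intervalIntegral_conj {f : ℝ → ℂ} : ∫ x in a..b, (starRingEnd ℂ) (f x)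
    = (starRingEnd ℂ) (∫ x in a..b, f x) := by
  rw [intervalIntegral, intervalIntegral, integral_conj, integral_conj, map_sub]

lemma osc_neg_eq_conj (φ : ℝ → ℝ) (ξ : ℝ) :
    osc (fun x => -φ x) ξ = (starRingEnd ℂ) (osc φ ξ) := by
  simp only [osc]
  rw [← Complex.exp_conj]
  congr 1
  simp only [map_mul, Complex.conj_I, Complex.conj_ofReal, Complex.ofReal_neg]
  ring

lemma norm_integral_osc_neg (φ : ℝ → ℝ) (a b : ℝ) :
    ‖∫ ξ in a..b, osc (fun x => -φ x) ξ‖ = ‖∫ ξ in a..b, osc φ ξ‖ := by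
  simp only [osc_neg_eq_conj]
  rw [intervalIntegral_conj]
  exact RCLike.norm_conj _

lemma vdc2' (hab : a ≤ b) (hlam : 0 < lam)
    (hd1 : ∀ x ∈ Icc a b, HasDerivAt φ (φ' x) x)
    (hd2 : ∀ x ∈ Icc a b, HasDerivAt φ' (φ'' x) x)
    (hc2 : ContinuousOn φ'' (Icc a b))
    (hhigh : ∀ x ∈ Icc a b, φ'' x ≤ -lam) :
    ‖∫ ξ in a..b, osc φ ξ‖ ≤ 10 * lam ^ (-(1/2 : ℝ)) := by
  rw [← norm_integral_osc_neg φ a b]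
  exact vdc2 (φ := fun x => -φ x) (φ' := fun x => -φ' x) (φ'' := fun x => -φ'' x)
    hab hlam (fun x hx => (hd1 x hx).neg) (fun x hx => (hd2 x hx).neg) hc2.neg
    (fun x hx => by show lam ≤ -φ'' x; linarith [hhigh x hx])

lemma vdc3 (hab : a ≤ b) (hlam : 0 < lam)
    (hd1 : ∀ x ∈ Icc a b, HasDerivAt φ (φ' x) x)
    (hd2 : ∀ x ∈ Icc a b, HasDerivAt φ' (φ'' x) x)
    (hd3 : ∀ x ∈ Icc a b, HasDerivAt φ'' (φ''' x) x)
    (hc3 : ContinuousOn φ''' (Icc a b))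
    (hlow : ∀ x ∈ Icc a b, lam ≤ φ''' x) :
    ‖∫ ξ in a..b, osc φ ξ‖ ≤ 22 * lam ^ (-(1/3 : ℝ)) := by
  obtain ⟨δ, hδdef⟩ : ∃ δ : ℝ, δ = lam ^ (-(1/3 : ℝ)) := ⟨_, rfl⟩
  have hδpos : 0 < δ := hδdef ▸ Real.rpow_pos_of_pos hlam _
  have hδlam : δ * lam = lam ^ ((2/3 : ℝ)) := by
    have h := Real.rpow_add hlam (-(1/3 : ℝ)) 1
    rw [Real.rpow_one] at h
    rw [hδdef, ← h]
    norm_num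
  have hlam23 : 0 < δ * lam := mul_pos hδpos hlam
  have hpow : 10 * (δ * lam) ^ (-(1/2 : ℝ)) = 10 * δ := by
    rw [hδlam, ← Real.rpow_mul hlam.le, hδdef]
    norm_num
  have hc2 : ContinuousOn φ'' (Icc a b) := fun x hx => (hd3 x hx).continuousAt.continuousWithinAt
  obtain ⟨c₁, c₂, h1, h2, h3, hlen, hL, hR⟩ := split_lemma hab hlam hδpos hd3 hlow
  have hc₁b : c₁ ≤ b := le_trans h2 h3
  have hac₂ : a ≤ c₂ := le_trans h1 h2
  have hφc : ContinuousOn φ (Icc a b) := fun x hx => (hd1 x hx).continuousAt.continuousWithinAt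
  have I₁ : IntervalIntegrable (osc φ) volume a c₁ :=
    osc_intervalIntegrable hφc (by rw [uIcc_of_le h1]; exact Icc_subset_Icc le_rfl hc₁b)
  have I₂ : IntervalIntegrable (osc φ) volume c₁ c₂ :=
    osc_intervalIntegrable hφc (by rw [uIcc_of_le h2]; exact Icc_subset_Icc h1 h3)
  have I₃ : IntervalIntegrable (osc φ) volume c₂ b :=
    osc_intervalIntegrable hφc (by rw [uIcc_of_le h3]; exact Icc_subset_Icc hac₂ le_rfl)
  have hsum : (∫ ξ in a..c₁, osc φ ξ) + (∫ ξ in c₁..c₂, osc φ ξ) + (∫ ξ in c₂..b, osc φ ξ)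
      = ∫ ξ in a..b, osc φ ξ := by
    rw [intervalIntegral.integral_add_adjacent_intervals I₁ I₂,
      intervalIntegral.integral_add_adjacent_intervals (I₁.trans I₂) I₃]
  have B₁ : ‖∫ ξ in a..c₁, osc φ ξ‖ ≤ 10 * (δ * lam) ^ (-(1/2 : ℝ)) := by
    rcases hL with h | h
    · rw [h]
      simp only [intervalIntegral.integral_same, norm_zero]
      positivity
    · have hsub : Icc a c₁ ⊆ Icc a b := Icc_subset_Icc le_rfl hc₁b
      exact vdc2' h1 hlam23
        (fun x hx => hd1 x (hsub hx)) (fun x hx => hd2 x (hsub hx)) (hc2.mono hsub)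
        (fun x hx => by linarith [h x hx])
  have B₃ : ‖∫ ξ in c₂..b, osc φ ξ‖ ≤ 10 * (δ * lam) ^ (-(1/2 : ℝ)) := by
    rcases hR with h | h
    · rw [h]
      simp only [intervalIntegral.integral_same, norm_zero]
      positivity
    · have hsub : Icc c₂ b ⊆ Icc a b := Icc_subset_Icc hac₂ le_rfl
      exact vdc2 h3 hlam23
        (fun x hx => hd1 x (hsub hx)) (fun x hx => hd2 x (hsub hx)) (hc2.mono hsub)
        (fun x hx => h x hx)
  have B₂ : ‖∫ ξ in c₁..c₂, osc φ ξ‖ ≤ 2 * δ :=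
    le_trans (norm_integral_osc_le_length h2) (by linarith)
  calc ‖∫ ξ in a..b, osc φ ξ‖
      ≤ ‖∫ ξ in a..c₁, osc φ ξ‖ + ‖∫ ξ in c₁..c₂, osc φ ξ‖ + ‖∫ ξ in c₂..b, osc φ ξ‖ := by
        rw [← hsum]
        exact le_trans (norm_add_le _ _) (by gcongr; exact norm_add_le _ _)
    _ ≤ 10 * (δ * lam) ^ (-(1/2 : ℝ)) + 2 * δ + 10 * (δ * lam) ^ (-(1/2 : ℝ)) := by gcongr
    _ = 22 * δ := by rw [hpow]; ring
    _ = 22 * lam ^ (-(1/3 : ℝ)) := by rw [hδdef]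

lemma vdc3' (hab : a ≤ b) (hlam : 0 < lam)
    (hd1 : ∀ x ∈ Icc a b, HasDerivAt φ (φ' x) x)
    (hd2 : ∀ x ∈ Icc a b, HasDerivAt φ' (φ'' x) x)
    (hd3 : ∀ x ∈ Icc a b, HasDerivAt φ'' (φ''' x) x)
    (hc3 : ContinuousOn φ''' (Icc a b))
    (hhigh : ∀ x ∈ Icc a b, φ''' x ≤ -lam) :
    ‖∫ ξ in a..b, osc φ ξ‖ ≤ 22 * lam ^ (-(1/3 : ℝ)) := by
  rw [← norm_integral_osc_neg φ a b]
  exact vdc3 (φ := fun x => -φ x) (φ' := fun x => -φ' x) (φ'' := fun x => -φ'' x)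
    (φ''' := fun x => -φ''' x) hab hlam
    (fun x hx => (hd1 x hx).neg) (fun x hx => (hd2 x hx).neg) (fun x hx => (hd3 x hx).neg)
    hc3.neg (fun x hx => by show lam ≤ -φ''' x; linarith [hhigh x hx])
end

/-- The discrete Schrödinger kernel
`K t j = (1/(2π)) ∫_{-π}^{π} e^{-4 i t sin²(ξ/2)} e^{ijξ} dξ`. -/
noncomputable def schrodingerKernel (t : ℝ) (j : ℤ) : ℂ :=
  (1 / (2 * Real.pi)) * ∫ ξ in (-Real.pi)..Real.pi,
    Complex.exp (-4 * Complex.I * (t : ℂ) * ((Real.sin (ξ / 2) : ℂ)) ^ 2) *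
      Complex.exp (Complex.I * (j : ℂ) * (ξ : ℂ))

noncomputable def phaseFn (t j : ℝ) (ξ : ℝ) : ℝ := 2*t*Real.cos ξ - 2*t + j*ξ

lemma kernel_eq (t : ℝ) (j : ℤ) : schrodingerKernel t j
    = (1 / (2 * Real.pi)) * ∫ ξ in (-Real.pi)..Real.pi, osc (phaseFn t (j : ℝ)) ξ := by
  unfold schrodingerKernel
  congr 1
  apply intervalIntegral.integral_congr
  intro ξ _
  show Complex.exp (-4 * Complex.I * (t : ℂ) * ((Real.sin (ξ / 2) : ℂ)) ^ 2) *
      Complex.exp (Complex.I * (j : ℂ) * (ξ : ℂ)) = _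
  rw [osc, ← Complex.exp_add]
  congr 1
  have hs : (Real.sin (ξ/2))^2 = 1/2 - Real.cos ξ / 2 := by
    have h := Real.sin_sq_eq_half_sub (ξ/2)
    rwa [show 2*(ξ/2) = ξ by ring] at h
  have hcast : ((Real.sin (ξ/2) : ℂ))^2 = ((Real.sin (ξ/2)^2 : ℝ) : ℂ) := by push_cast; ring
  rw [hcast, hs, phaseFn]
  push_cast
  ring

lemma phase_hd1 (t j : ℝ) (ξ : ℝ) :
    HasDerivAt (phaseFn t j) (-2*t*Real.sin ξ + j) ξ := by
  have h1 : HasDerivAt (fun ξ => 2*t*Real.cos ξ) (2*t*(-Real.sin ξ)) ξ :=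
    (Real.hasDerivAt_cos ξ).const_mul (2*t)
  have h2 := (h1.sub_const (2*t)).add ((hasDerivAt_id ξ).const_mul j)
  have : phaseFn t j = fun ξ => 2*t*Real.cos ξ - 2*t + j * id ξ := rfl
  rw [this]
  refine h2.congr_deriv ?_
  simp
  try ring

lemma phase_hd2 (t j : ℝ) (ξ : ℝ) :
    HasDerivAt (fun ξ => -2*t*Real.sin ξ + j) (-2*t*Real.cos ξ) ξ := by
  have h1 : HasDerivAt (fun ξ => -2*t*Real.sin ξ) (-2*t*Real.cos ξ) ξ :=
    (Real.hasDerivAt_sin ξ).const_mul (-2*t)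
  simpa using h1.add_const j

lemma phase_hd3 (t j : ℝ) (ξ : ℝ) :
    HasDerivAt (fun ξ => -2*t*Real.cos ξ) (2*t*Real.sin ξ) ξ := by
  have h1 := (Real.hasDerivAt_cos ξ).const_mul (-2*t)
  refine h1.congr_deriv ?_
  ring

-- trig range facts
lemma cos_le_neg_half_right {ξ : ℝ} (h : ξ ∈ Icc (2*π/3) π) : Real.cos ξ ≤ -(1/2) := by
  have h23 : Real.cos (2*π/3) = -(1/2) := by
    have := Real.cos_pi_sub (π/3)
    rw [Real.cos_pi_div_three] at this
    rw [show 2*π/3 = π - π/3 by ring, this]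
  have := Real.cos_le_cos_of_nonneg_of_le_pi (by positivity) h.2 h.1
  linarith [this, h23.le]

lemma cos_le_neg_half_left {ξ : ℝ} (h : ξ ∈ Icc (-π) (-(2*π/3))) : Real.cos ξ ≤ -(1/2) := by
  rw [← Real.cos_neg]
  exact cos_le_neg_half_right ⟨by linarith [h.2], by linarith [h.1]⟩

lemma half_le_cos_mid {ξ : ℝ} (h : ξ ∈ Icc (-(π/3)) (π/3)) : (1/2) ≤ Real.cos ξ := by
  rw [← Real.cos_abs]
  have habs : |ξ| ≤ π/3 := abs_le.2 ⟨by linarith [h.1], h.2⟩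
  have := Real.cos_le_cos_of_nonneg_of_le_pi (abs_nonneg ξ)
    (by linarith [Real.pi_pos]) habs
  rw [Real.cos_pi_div_three] at this
  linarith

lemma half_le_sin_mid {ξ : ℝ} (h : ξ ∈ Icc (π/3) (2*π/3)) : (1/2) ≤ Real.sin ξ := by
  rw [← Real.cos_pi_div_two_sub]
  have habs : |π/2 - ξ| ≤ π/3 := by
    rw [abs_le]
    constructor <;> [linarith [h.2, Real.pi_pos]; linarith [h.1, Real.pi_pos]]
  rw [← Real.cos_abs]
  have := Real.cos_le_cos_of_nonneg_of_le_pi (abs_nonneg _)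
    (by linarith [Real.pi_pos]) habs
  rw [Real.cos_pi_div_three] at this
  linarith

lemma sin_le_neg_half_mid {ξ : ℝ} (h : ξ ∈ Icc (-(2*π/3)) (-(π/3))) :
    Real.sin ξ ≤ -(1/2) := by
  have := half_le_sin_mid (ξ := -ξ) ⟨by linarith [h.2], by linarith [h.1]⟩
  rw [Real.sin_neg] at this
  linarith

lemma Mbound {t : ℝ} (ht : 1 ≤ t) (j : ℝ) :
    ‖∫ ξ in (-π)..π, osc (phaseFn t j) ξ‖ ≤ 74 * t ^ (-(1/3 : ℝ)) := by
  have htpos : 0 < t := lt_of_lt_of_le one_pos ht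
  have hpi := Real.pi_pos
  have hφc : ContinuousOn (phaseFn t j) (Icc (-π) π) :=
    fun x _ => (phase_hd1 t j x).continuousAt.continuousWithinAt
  have hc2 : ∀ s : Set ℝ, ContinuousOn (fun ξ => -2*t*Real.cos ξ) s :=
    fun s => (continuous_const.mul Real.continuous_cos).continuousOn
  have hc3 : ∀ s : Set ℝ, ContinuousOn (fun ξ => 2*t*Real.sin ξ) s :=
    fun s => (continuous_const.mul Real.continuous_sin).continuousOn
  have hd1 : ∀ x ∈ Icc (-π) π, HasDerivAt (phaseFn t j) (-2*t*Real.sin x + j) x :=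
    fun x _ => phase_hd1 t j x
  have hd2 : ∀ x ∈ Icc (-π) π, HasDerivAt (fun ξ => -2*t*Real.sin ξ + j) (-2*t*Real.cos x) x :=
    fun x _ => phase_hd2 t j x
  have hd3 : ∀ x ∈ Icc (-π) π, HasDerivAt (fun ξ => -2*t*Real.cos ξ) (2*t*Real.sin x) x :=
    fun x _ => phase_hd3 t j x
  -- five pieces
  have k1 : (-π) ≤ -(2*π/3) := by linarith
  have k2 : -(2*π/3) ≤ -(π/3) := by linarith
  have k3 : -(π/3) ≤ (π/3) := by linarith
  have k4 : (π/3) ≤ 2*π/3 := by linarith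
  have k5 : 2*π/3 ≤ π := by linarith
  have sub1 : Icc (-π) (-(2*π/3)) ⊆ Icc (-π) π := Icc_subset_Icc le_rfl (by linarith)
  have sub2 : Icc (-(2*π/3)) (-(π/3)) ⊆ Icc (-π) π := Icc_subset_Icc k1 (by linarith)
  have sub3 : Icc (-(π/3)) (π/3) ⊆ Icc (-π) π := Icc_subset_Icc (by linarith) (by linarith)
  have sub4 : Icc (π/3) (2*π/3) ⊆ Icc (-π) π := Icc_subset_Icc (by linarith) k5
  have sub5 : Icc (2*π/3) π ⊆ Icc (-π) π := Icc_subset_Icc (by linarith) le_rfl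
  have B1 : ‖∫ ξ in (-π)..(-(2*π/3)), osc (phaseFn t j) ξ‖ ≤ 10 * t ^ (-(1/2 : ℝ)) := by
    apply vdc2 k1 htpos (fun x hx => hd1 x (sub1 hx)) (fun x hx => hd2 x (sub1 hx)) (hc2 _)
    intro x hx
    have := cos_le_neg_half_left hx
    nlinarith
  have B2 : ‖∫ ξ in (-(2*π/3))..(-(π/3)), osc (phaseFn t j) ξ‖ ≤ 22 * t ^ (-(1/3 : ℝ)) := by
    apply vdc3' k2 htpos (fun x hx => hd1 x (sub2 hx)) (fun x hx => hd2 x (sub2 hx))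
      (fun x hx => hd3 x (sub2 hx)) (hc3 _)
    intro x hx
    have := sin_le_neg_half_mid hx
    nlinarith
  have B3 : ‖∫ ξ in (-(π/3))..(π/3), osc (phaseFn t j) ξ‖ ≤ 10 * t ^ (-(1/2 : ℝ)) := by
    apply vdc2' k3 htpos (fun x hx => hd1 x (sub3 hx)) (fun x hx => hd2 x (sub3 hx)) (hc2 _)
    intro x hx
    have := half_le_cos_mid hx
    nlinarith
  have B4 : ‖∫ ξ in (π/3)..(2*π/3), osc (phaseFn t j) ξ‖ ≤ 22 * t ^ (-(1/3 : ℝ)) := by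
    apply vdc3 k4 htpos (fun x hx => hd1 x (sub4 hx)) (fun x hx => hd2 x (sub4 hx))
      (fun x hx => hd3 x (sub4 hx)) (hc3 _)
    intro x hx
    have := half_le_sin_mid hx
    nlinarith
  have B5 : ‖∫ ξ in (2*π/3)..π, osc (phaseFn t j) ξ‖ ≤ 10 * t ^ (-(1/2 : ℝ)) := by
    apply vdc2 k5 htpos (fun x hx => hd1 x (sub5 hx)) (fun x hx => hd2 x (sub5 hx)) (hc2 _)
    intro x hx
    have := cos_le_neg_half_right hx
    nlinarith
  -- combine
  have II : ∀ c d : ℝ, uIcc c d ⊆ Icc (-π) π → IntervalIntegrable (osc (phaseFn t j)) volume c d :=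
    fun c d h => osc_intervalIntegrable hφc h
  have I1 := II (-π) (-(2*π/3)) (by rw [uIcc_of_le k1]; exact sub1)
  have I2 := II (-(2*π/3)) (-(π/3)) (by rw [uIcc_of_le k2]; exact sub2)
  have I3 := II (-(π/3)) (π/3) (by rw [uIcc_of_le k3]; exact sub3)
  have I4 := II (π/3) (2*π/3) (by rw [uIcc_of_le k4]; exact sub4)
  have I5 := II (2*π/3) π (by rw [uIcc_of_le k5]; exact sub5)
  have hsum : (∫ ξ in (-π)..(-(2*π/3)), osc (phaseFn t j) ξ)
      + (∫ ξ in (-(2*π/3))..(-(π/3)), osc (phaseFn t j) ξ)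
      + (∫ ξ in (-(π/3))..(π/3), osc (phaseFn t j) ξ)
      + (∫ ξ in (π/3)..(2*π/3), osc (phaseFn t j) ξ)
      + (∫ ξ in (2*π/3)..π, osc (phaseFn t j) ξ)
      = ∫ ξ in (-π)..π, osc (phaseFn t j) ξ := by
    rw [intervalIntegral.integral_add_adjacent_intervals I1 I2,
      intervalIntegral.integral_add_adjacent_intervals (I1.trans I2) I3,
      intervalIntegral.integral_add_adjacent_intervals ((I1.trans I2).trans I3) I4,
      intervalIntegral.integral_add_adjacent_intervals (((I1.trans I2).trans I3).trans I4) I5]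
  have hhalf : t ^ (-(1/2 : ℝ)) ≤ t ^ (-(1/3 : ℝ)) :=
    Real.rpow_le_rpow_of_exponent_le ht (by norm_num)
  calc ‖∫ ξ in (-π)..π, osc (phaseFn t j) ξ‖
      ≤ ‖∫ ξ in (-π)..(-(2*π/3)), osc (phaseFn t j) ξ‖
      + ‖∫ ξ in (-(2*π/3))..(-(π/3)), osc (phaseFn t j) ξ‖
      + ‖∫ ξ in (-(π/3))..(π/3), osc (phaseFn t j) ξ‖
      + ‖∫ ξ in (π/3)..(2*π/3), osc (phaseFn t j) ξ‖
      + ‖∫ ξ in (2*π/3)..π, osc (phaseFn t j) ξ‖ := by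
        rw [← hsum]
        refine le_trans (norm_add_le _ _) ?_
        gcongr
        refine le_trans (norm_add_le _ _) ?_
        gcongr
        refine le_trans (norm_add_le _ _) ?_
        gcongr
        exact norm_add_le _ _
    _ ≤ 10 * t ^ (-(1/2 : ℝ)) + 22 * t ^ (-(1/3 : ℝ)) + 10 * t ^ (-(1/2 : ℝ))
        + 22 * t ^ (-(1/3 : ℝ)) + 10 * t ^ (-(1/2 : ℝ)) := by gcongr
    _ ≤ 74 * t ^ (-(1/3 : ℝ)) := by nlinarith [hhalf]

lemma Mneg (t j : ℝ) : ‖∫ ξ in (-π)..π, osc (phaseFn t j) ξ‖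
    = ‖∫ ξ in (-π)..π, osc (phaseFn (-t) (-j)) ξ‖ := by
  have hfe : (fun x => -(phaseFn (-t) (-j) x)) = phaseFn t j := by
    funext x
    simp only [phaseFn]
    ring
  rw [← hfe, norm_integral_osc_neg]

lemma kernel_bound (t : ℝ) (j : ℤ) :
    ‖schrodingerKernel t j‖ ≤ 40 * (1 + |t|) ^ (-(1/3 : ℝ)) := by
  have hpi := Real.pi_pos
  have hpi3 := Real.pi_gt_three
  have h1t : (0 : ℝ) < 1 + |t| := by positivity
  rw [kernel_eq, norm_mul]
  have hco : ‖(1 / (2 * (π:ℝ)) : ℂ)‖ = 1 / (2*π) := by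
    rw [show ((1 / (2 * (π:ℝ)) : ℂ)) = ((1 / (2*π) : ℝ) : ℂ) by push_cast; ring]
    rw [Complex.norm_real, Real.norm_eq_abs, abs_of_pos (by positivity)]
  rw [hco]
  rcases le_or_gt (|t|) 1 with hcase | hcase
  · -- small t
    have hM : ‖∫ ξ in (-π)..π, osc (phaseFn t (j:ℝ)) ξ‖ ≤ 2*π := by
      have := norm_integral_osc_le_length (φ := phaseFn t (j:ℝ)) (by linarith : (-π) ≤ π)
      linarith
    have hK1 : 1 / (2*π) * ‖∫ ξ in (-π)..π, osc (phaseFn t (j:ℝ)) ξ‖ ≤ 1 := by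
      rw [div_mul_eq_mul_div, one_mul, div_le_one (by positivity)]
      linarith
    have hlow : (1/2 : ℝ) ≤ (1 + |t|) ^ (-(1/3 : ℝ)) := by
      have hb : (1 + |t|) ^ ((1/3 : ℝ)) ≤ 2 := by
        calc (1 + |t|) ^ ((1/3 : ℝ)) ≤ (2 : ℝ) ^ ((1/3 : ℝ)) :=
              Real.rpow_le_rpow (by positivity) (by linarith) (by norm_num)
          _ ≤ (2 : ℝ) ^ ((1 : ℝ)) := Real.rpow_le_rpow_of_exponent_le one_le_two (by norm_num)
          _ = 2 := Real.rpow_one 2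
      have hbpos : 0 < (1 + |t|) ^ ((1/3 : ℝ)) := Real.rpow_pos_of_pos h1t _
      rw [Real.rpow_neg h1t.le]
      rw [le_inv_comm₀ (by norm_num) hbpos]
      linarith
    linarith
  · -- |t| ≥ 1
    have hM : ‖∫ ξ in (-π)..π, osc (phaseFn t (j:ℝ)) ξ‖ ≤ 74 * |t| ^ (-(1/3 : ℝ)) := by
      rcases le_or_gt 0 t with hsign | hsign
      · rw [abs_of_nonneg hsign]
        have h1 : 1 ≤ t := by rw [abs_of_nonneg hsign] at hcase; exact hcase.le
        exact Mbound h1 (j : ℝ)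
      · rw [Mneg t (j:ℝ), abs_of_neg hsign]
        have h1 : 1 ≤ -t := by rw [abs_of_neg hsign] at hcase; exact hcase.le
        exact Mbound h1 (-(j:ℝ))
    have htpos : (0:ℝ) < |t| := by linarith
    have ha : 0 < |t| ^ ((1/3 : ℝ)) := Real.rpow_pos_of_pos htpos _
    have hbpos : 0 < (1 + |t|) ^ ((1/3 : ℝ)) := Real.rpow_pos_of_pos h1t _
    have hb2 : (1 + |t|) ^ ((1/3 : ℝ)) ≤ 2 * |t| ^ ((1/3 : ℝ)) := by
      calc (1 + |t|) ^ ((1/3 : ℝ)) ≤ (2 * |t|) ^ ((1/3 : ℝ)) :=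
            Real.rpow_le_rpow (by positivity) (by linarith) (by norm_num)
        _ = (2:ℝ) ^ ((1/3:ℝ)) * |t| ^ ((1/3 : ℝ)) := Real.mul_rpow (by norm_num) htpos.le
        _ ≤ 2 * |t| ^ ((1/3 : ℝ)) := by
            gcongr
            calc (2:ℝ) ^ ((1/3:ℝ)) ≤ (2:ℝ) ^ ((1:ℝ)) :=
                  Real.rpow_le_rpow_of_exponent_le one_le_two (by norm_num)
              _ = 2 := Real.rpow_one 2
    have hkey : 74 * |t| ^ (-(1/3 : ℝ)) ≤ (2*π) * (40 * (1 + |t|) ^ (-(1/3 : ℝ))) := by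
      rw [Real.rpow_neg htpos.le, Real.rpow_neg h1t.le]
      rw [← div_eq_mul_inv]
      rw [div_le_iff₀ ha]
      have expand : 2*π*(40*((1 + |t|) ^ ((1/3:ℝ)))⁻¹) * |t| ^ ((1/3:ℝ))
          = 80*π*(|t| ^ ((1/3:ℝ)) / (1 + |t|) ^ ((1/3:ℝ))) := by
        rw [div_eq_mul_inv]
        ring
      rw [expand]
      have hfrac : (1:ℝ)/2 ≤ |t| ^ ((1/3:ℝ)) / (1 + |t|) ^ ((1/3:ℝ)) := by
        rw [le_div_iff₀ hbpos]
        linarith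
      nlinarith [hfrac]
    calc 1/(2*π) * ‖∫ ξ in (-π)..π, osc (phaseFn t (j:ℝ)) ξ‖
        ≤ 1/(2*π) * (74 * |t| ^ (-(1/3 : ℝ))) := by
          gcongr <;> positivity
      _ ≤ 1/(2*π) * ((2*π) * (40 * (1 + |t|) ^ (-(1/3 : ℝ)))) := by
          gcongr <;> positivity
      _ = 40 * (1 + |t|) ^ (-(1/3 : ℝ)) := by
          field_simp

/-- Dispersive decay for the discrete Schrödinger equation on the positive integers with
Neumann boundary condition `u(t,0) = u(t,1)`; the solution is given by even reflection of
the whole-line kernel across `j = 1/2`. -/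
theorem discrete_schrodinger_neumann_decay :
    ∃ C > 0, ∀ (t : ℝ) (φ : {k : ℤ // 1 ≤ k} → ℂ),
      Summable (fun k : {k : ℤ // 1 ≤ k} => ‖φ k‖) →
      ∀ j : ℤ, 1 ≤ j →
        ‖∑' k : {k : ℤ // 1 ≤ k},
            (schrodingerKernel t (j - k.1) + schrodingerKernel t (j + k.1 - 1)) * φ k‖ ≤
          C * (1 + |t|) ^ (-(1 / 3 : ℝ)) * ∑' k : {k : ℤ // 1 ≤ k}, ‖φ k‖ := by
  refine ⟨80, by norm_num, ?_⟩
  intro t φ hφ j hj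
  obtain ⟨β, hβdef⟩ : ∃ β : ℝ, β = (1 + |t|) ^ (-(1/3 : ℝ)) := ⟨_, rfl⟩
  have hβpos : 0 < β := hβdef ▸ Real.rpow_pos_of_pos (by positivity) _
  have hterm : ∀ k : {k : ℤ // 1 ≤ k},
      ‖(schrodingerKernel t (j - k.1) + schrodingerKernel t (j + k.1 - 1)) * φ k‖
        ≤ (80 * β) * ‖φ k‖ := by
    intro k
    rw [norm_mul]
    have h1 := kernel_bound t (j - k.1)
    have h2 := kernel_bound t (j + k.1 - 1)
    have hK : ‖schrodingerKernel t (j - k.1) + schrodingerKernel t (j + k.1 - 1)‖ ≤ 80 * β := by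
      refine le_trans (norm_add_le _ _) ?_
      rw [hβdef]
      linarith
    exact mul_le_mul_of_nonneg_right hK (norm_nonneg _) |>.trans_eq rfl
  have hsum2 : Summable (fun k : {k : ℤ // 1 ≤ k} => (80 * β) * ‖φ k‖) := hφ.mul_left _
  have hsummand : Summable (fun k : {k : ℤ // 1 ≤ k} =>
      ‖(schrodingerKernel t (j - k.1) + schrodingerKernel t (j + k.1 - 1)) * φ k‖) :=
    Summable.of_nonneg_of_le (fun k => norm_nonneg _) hterm hsum2
  calc ‖∑' k : {k : ℤ // 1 ≤ k},
        (schrodingerKernel t (j - k.1) + schrodingerKernel t (j + k.1 - 1)) * φ k‖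
      ≤ ∑' k : {k : ℤ // 1 ≤ k},
        ‖(schrodingerKernel t (j - k.1) + schrodingerKernel t (j + k.1 - 1)) * φ k‖ :=
        norm_tsum_le_tsum_norm hsummand
    _ ≤ ∑' k : {k : ℤ // 1 ≤ k}, (80 * β) * ‖φ k‖ := Summable.tsum_le_tsum hterm hsummand hsum2
    _ = (80 * β) * ∑' k : {k : ℤ // 1 ≤ k}, ‖φ k‖ := tsum_mul_left
    _ = 80 * (1 + |t|) ^ (-(1/3 : ℝ)) * ∑' k : {k : ℤ // 1 ≤ k}, ‖φ k‖ := by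
        rw [hβdef, mul_assoc]
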